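/- Let (G,d) be a p-uniformly convex space with constant c > 0, D ⊂ G, T: D → G, and y ∈ Fix T ∩ D. If there exists λ ∈ (0,1) such that d(Tx, y) ≤ d((1−λ)x ⊕ λTx, y) for all x ∈ D, then T is pointwise α-firmly nonexpansive at y on D with constant α = 1/(λ+1). -/

import Mathlib

open Set

/-- The transport discrepancy `ψ_T^{(p,c)}(x,y)`. -/
noncomputable def transportDiscrepancy {G : Type*} [MetricSpace G] (p c : ℝ)
    (T : G → G) (x y : G) : ℝ :=
  c / 2 * (dist (T x) x ^ p + dist (T y) y ^ p + dist (T x) (T y) ^ p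
    + dist x y ^ p - dist (T x) y ^ p - dist x (T y) ^ p)

/-- If `y ∈ Fix T ∩ D` and there is `λ ∈ (0,1)` with
`d(Tx,y) ≤ d((1−λ)x ⊕ λTx, y)` for all `x ∈ D`, then `T` is pointwise α-firmly
nonexpansive at `y` on `D` with constant `α = 1/(λ+1)`. -/
theorem pafne_from_RLN_condition {G : Type*} [MetricSpace G] (p c : ℝ)
    (hp : 1 < p) (hc : 0 < c)
    (mix : G → G → ℝ → G)
    (hmix0 : ∀ x y : G, mix x y 0 = x) (hmix1 : ∀ x y : G, mix x y 1 = y)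
    (hcvx : ∀ t ∈ Icc (0:ℝ) 1, ∀ x y z : G,
      dist z (mix x y t) ^ p ≤ (1 - t) * dist z x ^ p + t * dist z y ^ p
        - c / 2 * t * (1 - t) * dist x y ^ p)
    (D : Set G) (T : G → G) (y : G) (hyD : y ∈ D) (hy : T y = y)
    (lam : ℝ) (hlam : lam ∈ Ioo (0:ℝ) 1)
    (hRLN : ∀ x ∈ D, dist (T x) y ≤ dist (mix x (T x) lam) y) :
    ∀ x ∈ D, dist (T x) (T y) ^ p
      ≤ dist x y ^ p
        - (1 - (1 / (lam + 1))) / (1 / (lam + 1)) * transportDiscrepancy p c T x y := by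
  intro x hx
  obtain ⟨hl0, hl1⟩ := hlam
  have key := hcvx lam ⟨hl0.le, hl1.le⟩ x (T x) y
  have h1 : dist (T x) y ^ p ≤ dist (mix x (T x) lam) y ^ p :=
    Real.rpow_le_rpow dist_nonneg (hRLN x hx) (by linarith)
  rw [dist_comm y (mix x (T x) lam), dist_comm y x, dist_comm y (T x)] at key
  have hchain : dist (T x) y ^ p ≤ (1 - lam) * dist x y ^ p + lam * dist (T x) y ^ p
      - c / 2 * lam * (1 - lam) * dist x (T x) ^ p := h1.trans key
  have hcoef : (1 - (1 / (lam + 1))) / (1 / (lam + 1)) = lam := by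
    field_simp
    ring
  rw [hcoef, hy]
  have hψ : transportDiscrepancy p c T x y = c / 2 * dist (T x) x ^ p := by
    simp only [transportDiscrepancy, hy]
    rw [dist_self, Real.zero_rpow (by positivity : p ≠ 0)]
    ring
  rw [hψ, dist_comm (T x) x]
  nlinarith [mul_pos hc (sub_pos.mpr hl1), sq_nonneg (1 - lam),
    Real.rpow_nonneg (dist_nonneg (x := x) (y := T x)) p]
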